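/- Set β_k := max{1, 2/(α_k(1−γ))} for k = 1,2. For L > 1 let Λ̃ := ⋃_{j=(j₁,j₂)∈ℤ^d, |j₁| ≤ 2L^{β₁} and |j₂| ≤ 2L^{β₂}} Λ_j. Then there exist C > 0 and L₀ > 1 such that for all L ≥ L₀ one has sup_{y∈ℝ^d, |y| ≤ L/2} ∫_{ℝ^d ∖ Λ̃} f(x − y) dx ≤ C · L^{−2}. -/

import Mathlib

open MeasureTheory ENNReal

noncomputable section

/-- The half-open unit cube `Λ_j = j + [-1/2, 1/2)^d` centred at the lattice point `j`. -/
def cube (d : ℕ) (j : Fin d → ℤ) : Set (Fin d → ℝ) :=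
  {x | ∀ i, (j i : ℝ) - 1/2 ≤ x i ∧ x i < (j i : ℝ) + 1/2}

/-- The unit cube in the product space `ℝ^{d₁} × ℝ^{d₂}` centred at the lattice point `j`. -/
def cubeP (d₁ d₂ : ℕ) (j : (Fin d₁ → ℤ) × (Fin d₂ → ℤ)) :
    Set ((Fin d₁ → ℝ) × (Fin d₂ → ℝ)) :=
  (cube d₁ j.1) ×ˢ (cube d₂ j.2)

namespace Stmt14Aux

open Set


open Set

lemma lintegral_scale {d : ℕ} (g : (Fin d → ℝ) → ℝ≥0∞) (hg : Measurable g) {r : ℝ} (hr : 0 < r) :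
    ∫⁻ x, g x = ENNReal.ofReal (r ^ d) * ∫⁻ x, g (r • x) := by
  have h1 : ∫⁻ x, g (r • x) = ∫⁻ x, g x ∂(Measure.map (r • ·) volume) :=
    (lintegral_map hg (measurable_const_smul r)).symm
  rw [h1, MeasureTheory.Measure.map_addHaar_smul volume hr.ne', lintegral_smul_measure]
  rw [smul_eq_mul, ← mul_assoc, ← ENNReal.ofReal_mul (by positivity)]
  rw [Module.finrank_fintype_fun_eq_card, Fintype.card_fin]
  rw [abs_of_pos (by positivity), mul_inv_cancel₀ (by positivity), ENNReal.ofReal_one, one_mul]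

lemma J1_lt_top {d : ℕ} {α : ℝ} (hα : (d : ℝ) < α) :
    ∫⁻ v : Fin d → ℝ, ENNReal.ofReal (1 / (1 + ‖v‖ ^ α)) < ∞ := by
  have hα0 : 0 < α := lt_of_le_of_lt (Nat.cast_nonneg d) hα
  have key : ∀ v : Fin d → ℝ, ENNReal.ofReal (1 / (1 + ‖v‖ ^ α)) ≤
      ENNReal.ofReal (2 ^ α) * ENNReal.ofReal ((1 + ‖v‖) ^ (-α)) := by
    intro v
    rw [← ENNReal.ofReal_mul (by positivity)]
    apply ENNReal.ofReal_le_ofReal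
    have hv : (0:ℝ) ≤ ‖v‖ := norm_nonneg v
    have h1 : (1 + ‖v‖) ^ α ≤ 2 ^ α * (1 + ‖v‖ ^ α) := by
      have hmax : 1 + ‖v‖ ≤ 2 * max 1 ‖v‖ := by
        rcases le_total ‖v‖ 1 with h | h
        · rw [max_eq_left h]; linarith
        · rw [max_eq_right h]; linarith
      calc (1 + ‖v‖) ^ α ≤ (2 * max 1 ‖v‖) ^ α :=
            Real.rpow_le_rpow (by positivity) hmax hα0.le
        _ = 2 ^ α * (max 1 ‖v‖) ^ α :=
            Real.mul_rpow (by norm_num) (zero_le_one.trans (le_max_left 1 ‖v‖))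
        _ ≤ 2 ^ α * (1 + ‖v‖ ^ α) := by
            gcongr
            rcases le_total ‖v‖ 1 with h | h
            · rw [max_eq_left h, Real.one_rpow]
              linarith [Real.rpow_nonneg (norm_nonneg v) α]
            · rw [max_eq_right h]
              have : (1:ℝ) ≤ ‖v‖ ^ α := Real.one_le_rpow h hα0.le
              linarith [Real.rpow_nonneg hv α]
    have hA : (0:ℝ) < (1 + ‖v‖) ^ α := by positivity
    have hB : (0:ℝ) < 1 + ‖v‖ ^ α := by
      have := Real.rpow_nonneg hv α; linarith
    rw [Real.rpow_neg (by positivity)]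
    rw [show (2:ℝ) ^ α * ((1 + ‖v‖) ^ α)⁻¹ = 2 ^ α / (1 + ‖v‖) ^ α from (div_eq_mul_inv _ _).symm]
    rw [div_le_div_iff₀ hB hA, one_mul]
    calc (1 + ‖v‖) ^ α ≤ 2 ^ α * (1 + ‖v‖ ^ α) := h1
      _ = 2 ^ α * (1 + ‖v‖ ^ α) := rfl
  calc ∫⁻ v : Fin d → ℝ, ENNReal.ofReal (1 / (1 + ‖v‖ ^ α))
      ≤ ∫⁻ v : Fin d → ℝ, ENNReal.ofReal (2 ^ α) * ENNReal.ofReal ((1 + ‖v‖) ^ (-α)) :=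
        lintegral_mono key
    _ = ENNReal.ofReal (2 ^ α) * ∫⁻ v : Fin d → ℝ, ENNReal.ofReal ((1 + ‖v‖) ^ (-α)) :=
        lintegral_const_mul _ (by fun_prop)
    _ < ∞ := by
        have hd : (Module.finrank ℝ (Fin d → ℝ) : ℝ) < α := by
          simpa [Module.finrank_fintype_fun_eq_card]
        exact ENNReal.mul_lt_top ENNReal.ofReal_lt_top (finite_integral_one_add_norm hd)

lemma meas_aux {d : ℕ} {α a : ℝ} :
    Measurable (fun v : Fin d → ℝ => ENNReal.ofReal (1 / (a + ‖v‖ ^ α))) := by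
  fun_prop

lemma inner_eq {d : ℕ} {α : ℝ} (hα : 0 < α) {a : ℝ} (ha : 0 < a) :
    ∫⁻ v : Fin d → ℝ, ENNReal.ofReal (1 / (a + ‖v‖ ^ α)) =
      ENNReal.ofReal (a ^ ((d : ℝ) / α - 1)) *
        ∫⁻ v : Fin d → ℝ, ENNReal.ofReal (1 / (1 + ‖v‖ ^ α)) := by
  set r : ℝ := a ^ (1 / α) with hrdef
  have hr0 : 0 < r := Real.rpow_pos_of_pos ha _
  have hra : r ^ α = a := by
    rw [hrdef, ← Real.rpow_mul ha.le, one_div_mul_cancel hα.ne', Real.rpow_one]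
  have step := lintegral_scale (fun v : Fin d → ℝ => ENNReal.ofReal (1 / (a + ‖v‖ ^ α)))
    meas_aux hr0
  have hpt : ∀ w : Fin d → ℝ, ENNReal.ofReal (1 / (a + ‖r • w‖ ^ α)) =
      ENNReal.ofReal a⁻¹ * ENNReal.ofReal (1 / (1 + ‖w‖ ^ α)) := by
    intro w
    have hnw : ‖r • w‖ = r * ‖w‖ := by
      rw [norm_smul, Real.norm_eq_abs, abs_of_pos hr0]
    have hpow : ‖r • w‖ ^ α = a * ‖w‖ ^ α := by
      rw [hnw, Real.mul_rpow hr0.le (norm_nonneg w), hra]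
    have ht : (0:ℝ) ≤ ‖w‖ ^ α := Real.rpow_nonneg (norm_nonneg w) α
    rw [hpow, ← ENNReal.ofReal_mul (by positivity)]
    congr 1
    field_simp
  have : (∫⁻ w : Fin d → ℝ, ENNReal.ofReal (1 / (a + ‖r • w‖ ^ α))) =
      ENNReal.ofReal a⁻¹ * ∫⁻ w : Fin d → ℝ, ENNReal.ofReal (1 / (1 + ‖w‖ ^ α)) := by
    simp_rw [hpt]
    exact lintegral_const_mul _ meas_aux
  rw [step, this, ← mul_assoc, ← ENNReal.ofReal_mul (by positivity)]
  congr 2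
  rw [← Real.rpow_natCast r d, hrdef, ← Real.rpow_mul ha.le,
    Real.rpow_sub ha, Real.rpow_one, div_eq_mul_inv]
  congr 1
  ring

lemma tail_eq {d : ℕ} {s R : ℝ} (hR : 0 < R) :
    ∫⁻ u in {u : Fin d → ℝ | R ≤ ‖u‖}, ENNReal.ofReal (‖u‖ ^ (-s)) =
      ENNReal.ofReal (R ^ ((d:ℝ) - s)) *
        ∫⁻ u in {u : Fin d → ℝ | 1 ≤ ‖u‖}, ENNReal.ofReal (‖u‖ ^ (-s)) := by
  have hmR : MeasurableSet {u : Fin d → ℝ | R ≤ ‖u‖} :=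
    measurableSet_le measurable_const measurable_norm
  have hm1 : MeasurableSet {u : Fin d → ℝ | 1 ≤ ‖u‖} :=
    measurableSet_le measurable_const measurable_norm
  have hmeas : Measurable (fun u : Fin d → ℝ => ENNReal.ofReal (‖u‖ ^ (-s))) := by fun_prop
  rw [← lintegral_indicator hmR, ← lintegral_indicator hm1]
  rw [lintegral_scale _ (hmeas.indicator hmR) hR]
  have hpt : ∀ w : Fin d → ℝ,
      ({u : Fin d → ℝ | R ≤ ‖u‖}).indicator (fun u => ENNReal.ofReal (‖u‖ ^ (-s))) (R • w) =
      ENNReal.ofReal (R ^ (-s)) *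
        ({u : Fin d → ℝ | 1 ≤ ‖u‖}).indicator (fun u => ENNReal.ofReal (‖u‖ ^ (-s))) w := by
    intro w
    have hnw : ‖R • w‖ = R * ‖w‖ := by
      rw [norm_smul, Real.norm_eq_abs, abs_of_pos hR]
    by_cases h1 : (1:ℝ) ≤ ‖w‖
    · have hmem : R • w ∈ {u : Fin d → ℝ | R ≤ ‖u‖} := by
        simp only [mem_setOf_eq, hnw]; nlinarith
      rw [Set.indicator_of_mem hmem,
        Set.indicator_of_mem (show w ∈ {u : Fin d → ℝ | 1 ≤ ‖u‖} from h1)]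
      rw [hnw, Real.mul_rpow hR.le (norm_nonneg w), ENNReal.ofReal_mul (by positivity)]
    · have hmem : R • w ∉ {u : Fin d → ℝ | R ≤ ‖u‖} := by
        simp only [mem_setOf_eq, hnw, not_le]
        push_neg at h1
        nlinarith
      rw [Set.indicator_of_notMem hmem,
        Set.indicator_of_notMem (show w ∉ {u : Fin d → ℝ | 1 ≤ ‖u‖} from h1), mul_zero]
  simp_rw [hpt]
  rw [lintegral_const_mul _ (hmeas.indicator hm1), ← mul_assoc,
    ← ENNReal.ofReal_mul (by positivity)]
  congr 2
  rw [← Real.rpow_natCast R d, ← Real.rpow_add hR, sub_eq_add_neg]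

lemma K1_lt_top {d : ℕ} {s : ℝ} (hs : (d:ℝ) < s) :
    ∫⁻ u in {u : Fin d → ℝ | 1 ≤ ‖u‖}, ENNReal.ofReal (‖u‖ ^ (-s)) < ∞ := by
  have hs0 : 0 < s := lt_of_le_of_lt (Nat.cast_nonneg d) hs
  calc ∫⁻ u in {u : Fin d → ℝ | 1 ≤ ‖u‖}, ENNReal.ofReal (‖u‖ ^ (-s))
      ≤ ∫⁻ u in {u : Fin d → ℝ | 1 ≤ ‖u‖},
          ENNReal.ofReal (2 ^ s) * ENNReal.ofReal ((1 + ‖u‖) ^ (-s)) := by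
        apply setLIntegral_mono (by fun_prop)
        intro u hu
        have hu1 : (1:ℝ) ≤ ‖u‖ := hu
        have hu0 : (0:ℝ) < ‖u‖ := lt_of_lt_of_le one_pos hu1
        rw [← ENNReal.ofReal_mul (by positivity)]
        apply ENNReal.ofReal_le_ofReal
        have h2 : (1 + ‖u‖) ^ s ≤ 2 ^ s * ‖u‖ ^ s := by
          calc (1 + ‖u‖) ^ s ≤ (2 * ‖u‖) ^ s :=
                Real.rpow_le_rpow (by positivity) (by linarith) hs0.le
            _ = 2 ^ s * ‖u‖ ^ s := Real.mul_rpow (by norm_num) hu0.le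
        rw [Real.rpow_neg hu0.le, Real.rpow_neg (by positivity)]
        rw [show (2:ℝ) ^ s * ((1 + ‖u‖) ^ s)⁻¹ = 2 ^ s / (1 + ‖u‖) ^ s from
          (div_eq_mul_inv _ _).symm, show (‖u‖ ^ s)⁻¹ = 1 / ‖u‖ ^ s from (one_div _).symm]
        rw [div_le_div_iff₀ (by positivity) (by positivity), one_mul]
        calc (1 + ‖u‖) ^ s ≤ 2 ^ s * ‖u‖ ^ s := h2
          _ = 2 ^ s * ‖u‖ ^ s := rfl
    _ ≤ ∫⁻ u, ENNReal.ofReal (2 ^ s) * ENNReal.ofReal ((1 + ‖u‖) ^ (-s)) :=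
        setLIntegral_le_lintegral _ _
    _ = ENNReal.ofReal (2 ^ s) * ∫⁻ u : Fin d → ℝ, ENNReal.ofReal ((1 + ‖u‖) ^ (-s)) :=
        lintegral_const_mul _ (by fun_prop)
    _ < ∞ := by
        have hd : (Module.finrank ℝ (Fin d → ℝ) : ℝ) < s := by
          simpa [Module.finrank_fintype_fun_eq_card]
        exact ENNReal.mul_lt_top ENNReal.ofReal_lt_top (finite_integral_one_add_norm hd)

lemma core (d₁ d₂ : ℕ) (α₁ α₂ : ℝ) (hα₁ : 0 < α₁) (hα₂ : 0 < α₂)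
    (hγ : (d₁:ℝ)/α₁ + (d₂:ℝ)/α₂ < 1) :
    ∃ M : ℝ≥0∞, M < ∞ ∧ ∀ R : ℝ, 1 ≤ R →
      (∫⁻ u : (Fin d₁ → ℝ) × (Fin d₂ → ℝ) in {u | R ≤ ‖u.1‖},
        ENNReal.ofReal (1 / (‖u.1‖ ^ α₁ + ‖u.2‖ ^ α₂))) ≤
      M * ENNReal.ofReal (R ^ (-(α₁ * (1 - ((d₁:ℝ)/α₁ + (d₂:ℝ)/α₂))))) := by
  set γ₂ : ℝ := (d₂:ℝ)/α₂ with hγ₂def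
  set s : ℝ := α₁ * (1 - γ₂) with hsdef
  have hγ₁0 : (0:ℝ) ≤ (d₁:ℝ)/α₁ := by positivity
  have hγ₂0 : (0:ℝ) ≤ γ₂ := by positivity
  have hd₂α₂ : (d₂:ℝ) < α₂ := by
    rw [← div_lt_one hα₂]; linarith
  have hd₁s : (d₁:ℝ) < s := by
    have h1 : (d₁:ℝ)/α₁ < 1 - γ₂ := by linarith
    have := (div_lt_iff₀ hα₁).mp h1
    rw [hsdef]; linarith [this]
  set J1 : ℝ≥0∞ := ∫⁻ v : Fin d₂ → ℝ, ENNReal.ofReal (1 / (1 + ‖v‖ ^ α₂)) with hJ1def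
  set K1 : ℝ≥0∞ := ∫⁻ u in {u : Fin d₁ → ℝ | 1 ≤ ‖u‖}, ENNReal.ofReal (‖u‖ ^ (-s)) with hK1def
  refine ⟨K1 * J1, ENNReal.mul_lt_top (K1_lt_top hd₁s) (J1_lt_top hd₂α₂), ?_⟩
  intro R hR
  have hR0 : (0:ℝ) < R := lt_of_lt_of_le one_pos hR
  set S : Set (Fin d₁ → ℝ) := {u₁ | R ≤ ‖u₁‖} with hSdef
  have hmS : MeasurableSet S := measurableSet_le measurable_const measurable_norm
  have hset : {u : (Fin d₁ → ℝ) × (Fin d₂ → ℝ) | R ≤ ‖u.1‖} = S ×ˢ univ := by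
    ext u; simp [hSdef]
  have hrestr : (volume : Measure ((Fin d₁ → ℝ) × (Fin d₂ → ℝ))).restrict (S ×ˢ univ) =
      (volume.restrict S).prod volume := by
    rw [Measure.volume_eq_prod, ← Measure.prod_restrict, Measure.restrict_univ]
  have hgmeas : Measurable (fun u : (Fin d₁ → ℝ) × (Fin d₂ → ℝ) =>
      ENNReal.ofReal (1 / (‖u.1‖ ^ α₁ + ‖u.2‖ ^ α₂))) := by fun_prop
  rw [hset, hrestr, lintegral_prod _ hgmeas.aemeasurable]
  have hinner : ∀ u₁ ∈ S,
      (∫⁻ u₂ : Fin d₂ → ℝ, ENNReal.ofReal (1 / (‖u₁‖ ^ α₁ + ‖u₂‖ ^ α₂))) =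
      ENNReal.ofReal (‖u₁‖ ^ (-s)) * J1 := by
    intro u₁ hu₁
    have hu₁0 : (0:ℝ) < ‖u₁‖ := lt_of_lt_of_le hR0 hu₁
    have ha : (0:ℝ) < ‖u₁‖ ^ α₁ := Real.rpow_pos_of_pos hu₁0 _
    rw [inner_eq hα₂ ha]
    congr 2
    rw [← Real.rpow_mul (norm_nonneg u₁)]
    congr 1
    rw [hsdef, hγ₂def]; ring
  rw [setLIntegral_congr_fun hmS hinner]
  rw [lintegral_mul_const _ (by fun_prop), tail_eq hR0, ← hK1def]
  have hexp : (d₁:ℝ) - s = -(α₁ * (1 - ((d₁:ℝ)/α₁ + γ₂))) := by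
    rw [hsdef, hγ₂def]
    field_simp
    ring
  rw [hexp]
  exact le_of_eq (by ring)

end Stmt14Aux

set_option maxHeartbeats 1000000 in
/-- with `β_k = max{1, 2/(α_k(1-γ))}` and
`Λ̃ = ⋃ {Λ_j : |j₁| ≤ 2L^{β₁}, |j₂| ≤ 2L^{β₂}}`, there are `C > 0` and `L₀ > 1` such
that for all `L ≥ L₀`, `sup_{|y| ≤ L/2} ∫_{ℝ^d ∖ Λ̃} f(x-y) dx ≤ C L⁻²`. -/
theorem statement14 (d₁ d₂ : ℕ) (hd₁ : 0 < d₁) (hd₂ : 0 < d₂)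
    (f : (Fin d₁ → ℝ) × (Fin d₂ → ℝ) → ℝ)
    (hf_meas : Measurable f) (hf_nonneg : ∀ x, 0 ≤ f x)
    (α₁ α₂ : ℝ) (hα₁ : 0 < α₁) (hα₂ : 0 < α₂)
    (hγ : (d₁ : ℝ) / α₁ + (d₂ : ℝ) / α₂ < 1)
    (f_u f₀ r₀ : ℝ) (hfu : 0 < f_u) (hf₀ : 0 < f₀) (hr₀ : 0 < r₀)
    (h_low : ∀ x : (Fin d₁ → ℝ) × (Fin d₂ → ℝ), r₀ ≤ max ‖x.1‖ ‖x.2‖ →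
      ENNReal.ofReal (f_u / (‖x.1‖ ^ α₁ + ‖x.2‖ ^ α₂)) ≤
        ∫⁻ y in cubeP d₁ d₂ 0, ENNReal.ofReal (f (y - x)))
    (h_upp : ∀ x : (Fin d₁ → ℝ) × (Fin d₂ → ℝ), r₀ ≤ max ‖x.1‖ ‖x.2‖ →
      f x ≤ f₀ / (‖x.1‖ ^ α₁ + ‖x.2‖ ^ α₂))
    (β₁ β₂ : ℝ)
    (hβ₁ : β₁ = max 1 (2 / (α₁ * (1 - ((d₁ : ℝ) / α₁ + (d₂ : ℝ) / α₂)))))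
    (hβ₂ : β₂ = max 1 (2 / (α₂ * (1 - ((d₁ : ℝ) / α₁ + (d₂ : ℝ) / α₂))))) :
    ∃ C L₀ : ℝ, 0 < C ∧ 1 < L₀ ∧
      ∀ L : ℝ, L₀ ≤ L →
      ∀ y : (Fin d₁ → ℝ) × (Fin d₂ → ℝ), ‖y‖ ≤ L / 2 →
        (∫⁻ x in (⋃ j ∈ {j : (Fin d₁ → ℤ) × (Fin d₂ → ℤ) |
              ‖j.1‖ ≤ 2 * L ^ β₁ ∧ ‖j.2‖ ≤ 2 * L ^ β₂}, cubeP d₁ d₂ j)ᶜ,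
            ENNReal.ofReal (f (x - y))) ≤ ENNReal.ofReal (C / L ^ 2) := by
  -- abbreviations
  have h1γ : (0:ℝ) < 1 - ((d₁ : ℝ) / α₁ + (d₂ : ℝ) / α₂) := by linarith
  have hγswap : (d₂:ℝ)/α₂ + (d₁:ℝ)/α₁ < 1 := by rw [add_comm]; exact hγ
  set γ : ℝ := (d₁ : ℝ) / α₁ + (d₂ : ℝ) / α₂ with hγdef
  have he₁ : (0:ℝ) < α₁ * (1 - γ) := by positivity
  have he₂ : (0:ℝ) < α₂ * (1 - γ) := by positivity
  have hβ₁1 : 1 ≤ β₁ := hβ₁ ▸ le_max_left _ _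
  have hβ₂1 : 1 ≤ β₂ := hβ₂ ▸ le_max_left _ _
  have hβ₁e : 2 ≤ β₁ * (α₁ * (1 - γ)) := by
    have h := hβ₁ ▸ le_max_right 1 (2 / (α₁ * (1 - γ)))
    calc (2:ℝ) = 2 / (α₁ * (1 - γ)) * (α₁ * (1 - γ)) := by field_simp
      _ ≤ β₁ * (α₁ * (1 - γ)) := by gcongr
  have hβ₂e : 2 ≤ β₂ * (α₂ * (1 - γ)) := by
    have h := hβ₂ ▸ le_max_right 1 (2 / (α₂ * (1 - γ)))
    calc (2:ℝ) = 2 / (α₂ * (1 - γ)) * (α₂ * (1 - γ)) := by field_simp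
      _ ≤ β₂ * (α₂ * (1 - γ)) := by gcongr
  obtain ⟨M₁, hM₁fin, hM₁⟩ := Stmt14Aux.core d₁ d₂ α₁ α₂ hα₁ hα₂ hγ
  obtain ⟨M₂, hM₂fin, hM₂⟩ := Stmt14Aux.core d₂ d₁ α₂ α₁ hα₂ hα₁ hγswap
  set N : ℝ≥0∞ := ENNReal.ofReal f₀ * (M₁ + M₂) with hNdef
  have hNfin : N ≠ ∞ :=
    (ENNReal.mul_lt_top ENNReal.ofReal_lt_top (ENNReal.add_lt_top.mpr ⟨hM₁fin, hM₂fin⟩)).ne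
  refine ⟨N.toReal + 1, max 2 r₀, by positivity,
    lt_of_lt_of_le one_lt_two (le_max_left _ _), ?_⟩
  intro L hL y hy
  have hL2 : (2:ℝ) ≤ L := le_trans (le_max_left _ _) hL
  have hr₀L : r₀ ≤ L := le_trans (le_max_right _ _) hL
  have hL1 : (1:ℝ) ≤ L := by linarith
  have hL0 : (0:ℝ) < L := by linarith
  set R₁ : ℝ := L ^ β₁ with hR₁def
  set R₂ : ℝ := L ^ β₂ with hR₂def
  have hR₁L : L ≤ R₁ := by
    calc L = L ^ (1:ℝ) := (Real.rpow_one L).symm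
      _ ≤ L ^ β₁ := Real.rpow_le_rpow_of_exponent_le hL1 hβ₁1
  have hR₂L : L ≤ R₂ := by
    calc L = L ^ (1:ℝ) := (Real.rpow_one L).symm
      _ ≤ L ^ β₂ := Real.rpow_le_rpow_of_exponent_le hL1 hβ₂1
  have hR₁1 : (1:ℝ) ≤ R₁ := le_trans hL1 hR₁L
  have hR₂1 : (1:ℝ) ≤ R₂ := le_trans hL1 hR₂L
  set A : Set ((Fin d₁ → ℝ) × (Fin d₂ → ℝ)) := {u | R₁ ≤ ‖u.1‖} with hAdef
  set B : Set ((Fin d₁ → ℝ) × (Fin d₂ → ℝ)) := {u | R₂ ≤ ‖u.2‖} with hBdef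
  -- geometry
  have hsub : (⋃ j ∈ {j : (Fin d₁ → ℤ) × (Fin d₂ → ℤ) |
      ‖j.1‖ ≤ 2 * L ^ β₁ ∧ ‖j.2‖ ≤ 2 * L ^ β₂}, cubeP d₁ d₂ j)ᶜ ⊆
      (fun x => x - y) ⁻¹' (A ∪ B) := by
    intro x hx
    set j₁ : Fin d₁ → ℤ := fun i => round (x.1 i) with hj₁def
    set j₂ : Fin d₂ → ℤ := fun i => round (x.2 i) with hj₂def
    have hmem : x ∈ cubeP d₁ d₂ (j₁, j₂) := by
      constructor
      · intro i
        rw [hj₁def]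
        simp only [round_eq]
        constructor
        · have := Int.floor_le (x.1 i + 1/2); push_cast at this ⊢; linarith
        · have := Int.lt_floor_add_one (x.1 i + 1/2); push_cast at this ⊢; linarith
      · intro i
        rw [hj₂def]
        simp only [round_eq]
        constructor
        · have := Int.floor_le (x.2 i + 1/2); push_cast at this ⊢; linarith
        · have := Int.lt_floor_add_one (x.2 i + 1/2); push_cast at this ⊢; linarith
    have hjnot : ¬(‖(j₁, j₂).1‖ ≤ 2 * L ^ β₁ ∧ ‖(j₁, j₂).2‖ ≤ 2 * L ^ β₂) := by
      intro hj
      exact hx (Set.mem_biUnion hj hmem)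
    have key₁ : ‖j₁‖ ≤ ‖x.1‖ + 1/2 := by
      rw [pi_norm_le_iff_of_nonneg (by positivity)]
      intro i
      rw [Int.norm_eq_abs]
      have h1 : |(j₁ i : ℝ) - x.1 i| ≤ 1/2 := by
        rw [hj₁def, abs_sub_comm]
        exact abs_sub_round (x.1 i)
      have h2 : |x.1 i| ≤ ‖x.1‖ := by
        rw [← Real.norm_eq_abs]; exact norm_le_pi_norm x.1 i
      have h3 : |(j₁ i : ℝ)| - |x.1 i| ≤ |(j₁ i : ℝ) - x.1 i| :=
        abs_sub_abs_le_abs_sub _ _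
      linarith
    have key₂ : ‖j₂‖ ≤ ‖x.2‖ + 1/2 := by
      rw [pi_norm_le_iff_of_nonneg (by positivity)]
      intro i
      rw [Int.norm_eq_abs]
      have h1 : |(j₂ i : ℝ) - x.2 i| ≤ 1/2 := by
        rw [hj₂def, abs_sub_comm]
        exact abs_sub_round (x.2 i)
      have h2 : |x.2 i| ≤ ‖x.2‖ := by
        rw [← Real.norm_eq_abs]; exact norm_le_pi_norm x.2 i
      have h3 : |(j₂ i : ℝ)| - |x.2 i| ≤ |(j₂ i : ℝ) - x.2 i| :=
        abs_sub_abs_le_abs_sub _ _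
      linarith
    rcases not_and_or.mp hjnot with hj1 | hj2
    · push_neg at hj1
      left
      show R₁ ≤ ‖(x - y).1‖
      have hx1 : 2 * R₁ - 1/2 ≤ ‖x.1‖ := by
        have : (‖(j₁, j₂).1‖ : ℝ) = ‖j₁‖ := rfl
        rw [this] at hj1
        rw [hR₁def]
        linarith
      have hy1 : ‖y.1‖ ≤ L / 2 := le_trans (norm_fst_le y) hy
      have htri : ‖x.1‖ - ‖y.1‖ ≤ ‖x.1 - y.1‖ := norm_sub_norm_le _ _
      have hfst : (x - y).1 = x.1 - y.1 := rfl
      rw [hfst]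
      linarith
    · push_neg at hj2
      right
      show R₂ ≤ ‖(x - y).2‖
      have hx2 : 2 * R₂ - 1/2 ≤ ‖x.2‖ := by
        have : (‖(j₁, j₂).2‖ : ℝ) = ‖j₂‖ := rfl
        rw [this] at hj2
        rw [hR₂def]
        linarith
      have hy2 : ‖y.2‖ ≤ L / 2 := le_trans (norm_snd_le y) hy
      have htri : ‖x.2‖ - ‖y.2‖ ≤ ‖x.2 - y.2‖ := norm_sub_norm_le _ _
      have hsnd : (x - y).2 = x.2 - y.2 := rfl
      rw [hsnd]
      linarith
  -- translation
  have hTmp : MeasurePreserving (fun x : (Fin d₁ → ℝ) × (Fin d₂ → ℝ) => x - y)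
      volume volume := by
    rw [Measure.volume_eq_prod]
    exact measurePreserving_sub_right _ y
  have htrans : (∫⁻ x in (fun x : (Fin d₁ → ℝ) × (Fin d₂ → ℝ) => x - y) ⁻¹' (A ∪ B),
        ENNReal.ofReal (f (x - y))) = ∫⁻ u in A ∪ B, ENNReal.ofReal (f u) :=
    hTmp.setLIntegral_comp_preimage_emb (MeasurableEquiv.subRight y).measurableEmbedding
      (fun u => ENNReal.ofReal (f u)) (A ∪ B)
  -- bounds on A and B
  have hgmeas : Measurable (fun u : (Fin d₁ → ℝ) × (Fin d₂ → ℝ) =>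
      ENNReal.ofReal (1 / (‖u.1‖ ^ α₁ + ‖u.2‖ ^ α₂))) := by fun_prop
  have hL2exp : ∀ c R : ℝ, R = L ^ c → 2 ≤ c * (α₁ * (1-γ)) → True := fun _ _ _ _ => trivial
  have hpow₁ : ENNReal.ofReal (R₁ ^ (-(α₁ * (1 - γ)))) ≤ ENNReal.ofReal (L ^ (-2:ℝ)) := by
    apply ENNReal.ofReal_le_ofReal
    rw [hR₁def, ← Real.rpow_mul hL0.le]
    apply Real.rpow_le_rpow_of_exponent_le hL1
    nlinarith
  have hpow₂ : ENNReal.ofReal (R₂ ^ (-(α₂ * (1 - γ)))) ≤ ENNReal.ofReal (L ^ (-2:ℝ)) := by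
    apply ENNReal.ofReal_le_ofReal
    rw [hR₂def, ← Real.rpow_mul hL0.le]
    apply Real.rpow_le_rpow_of_exponent_le hL1
    nlinarith
  have hptA : ∀ u ∈ A, ENNReal.ofReal (f u) ≤
      ENNReal.ofReal f₀ * ENNReal.ofReal (1 / (‖u.1‖ ^ α₁ + ‖u.2‖ ^ α₂)) := by
    intro u hu
    have hu1 : R₁ ≤ ‖u.1‖ := hu
    have hr : r₀ ≤ max ‖u.1‖ ‖u.2‖ :=
      le_trans (le_trans hr₀L (le_trans hR₁L hu1)) (le_max_left _ _)
    rw [← ENNReal.ofReal_mul hf₀.le]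
    apply ENNReal.ofReal_le_ofReal
    rw [mul_one_div]
    exact h_upp u hr
  have hA : (∫⁻ u in A, ENNReal.ofReal (f u)) ≤
      ENNReal.ofReal f₀ * M₁ * ENNReal.ofReal (L ^ (-2:ℝ)) := by
    calc (∫⁻ u in A, ENNReal.ofReal (f u))
        ≤ ∫⁻ u in A, ENNReal.ofReal f₀ *
            ENNReal.ofReal (1 / (‖u.1‖ ^ α₁ + ‖u.2‖ ^ α₂)) :=
          setLIntegral_mono (by fun_prop) hptA
      _ = ENNReal.ofReal f₀ * ∫⁻ u in A,
            ENNReal.ofReal (1 / (‖u.1‖ ^ α₁ + ‖u.2‖ ^ α₂)) :=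
          lintegral_const_mul _ hgmeas
      _ ≤ ENNReal.ofReal f₀ * (M₁ * ENNReal.ofReal (R₁ ^ (-(α₁ * (1 - γ))))) := by
          gcongr
          exact hM₁ R₁ hR₁1
      _ ≤ ENNReal.ofReal f₀ * (M₁ * ENNReal.ofReal (L ^ (-2:ℝ))) := by gcongr
      _ = ENNReal.ofReal f₀ * M₁ * ENNReal.ofReal (L ^ (-2:ℝ)) := by ring
  -- swap for B
  have hswapMP : MeasurePreserving
      (Prod.swap : (Fin d₂ → ℝ) × (Fin d₁ → ℝ) → (Fin d₁ → ℝ) × (Fin d₂ → ℝ))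
      volume volume := by
    rw [Measure.volume_eq_prod, Measure.volume_eq_prod]
    exact Measure.measurePreserving_swap
  have hswapInt : (∫⁻ v : (Fin d₂ → ℝ) × (Fin d₁ → ℝ) in {v | R₂ ≤ ‖v.1‖},
        ENNReal.ofReal (1 / (‖v.2‖ ^ α₁ + ‖v.1‖ ^ α₂))) =
      ∫⁻ u in B, ENNReal.ofReal (1 / (‖u.1‖ ^ α₁ + ‖u.2‖ ^ α₂)) := by
    have := hswapMP.setLIntegral_comp_preimage_emb
      MeasurableEquiv.prodComm.measurableEmbedding
      (fun u : (Fin d₁ → ℝ) × (Fin d₂ → ℝ) =>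
        ENNReal.ofReal (1 / (‖u.1‖ ^ α₁ + ‖u.2‖ ^ α₂))) B
    exact this
  have hB : (∫⁻ u in B, ENNReal.ofReal (f u)) ≤
      ENNReal.ofReal f₀ * M₂ * ENNReal.ofReal (L ^ (-2:ℝ)) := by
    have hptB : ∀ u ∈ B, ENNReal.ofReal (f u) ≤
        ENNReal.ofReal f₀ * ENNReal.ofReal (1 / (‖u.1‖ ^ α₁ + ‖u.2‖ ^ α₂)) := by
      intro u hu
      have hu2 : R₂ ≤ ‖u.2‖ := hu
      have hr : r₀ ≤ max ‖u.1‖ ‖u.2‖ :=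
        le_trans (le_trans hr₀L (le_trans hR₂L hu2)) (le_max_right _ _)
      rw [← ENNReal.ofReal_mul hf₀.le]
      apply ENNReal.ofReal_le_ofReal
      rw [mul_one_div]
      exact h_upp u hr
    calc (∫⁻ u in B, ENNReal.ofReal (f u))
        ≤ ∫⁻ u in B, ENNReal.ofReal f₀ *
            ENNReal.ofReal (1 / (‖u.1‖ ^ α₁ + ‖u.2‖ ^ α₂)) :=
          setLIntegral_mono (by fun_prop) hptB
      _ = ENNReal.ofReal f₀ * ∫⁻ u in B,
            ENNReal.ofReal (1 / (‖u.1‖ ^ α₁ + ‖u.2‖ ^ α₂)) :=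
          lintegral_const_mul _ hgmeas
      _ = ENNReal.ofReal f₀ * ∫⁻ v : (Fin d₂ → ℝ) × (Fin d₁ → ℝ) in {v | R₂ ≤ ‖v.1‖},
            ENNReal.ofReal (1 / (‖v.2‖ ^ α₁ + ‖v.1‖ ^ α₂)) := by rw [hswapInt]
      _ = ENNReal.ofReal f₀ * ∫⁻ v : (Fin d₂ → ℝ) × (Fin d₁ → ℝ) in {v | R₂ ≤ ‖v.1‖},
            ENNReal.ofReal (1 / (‖v.1‖ ^ α₂ + ‖v.2‖ ^ α₁)) := by
          congr 1
          apply lintegral_congr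
          intro v
          rw [add_comm]
      _ ≤ ENNReal.ofReal f₀ * (M₂ * ENNReal.ofReal (R₂ ^ (-(α₂ * (1 - ((d₂:ℝ)/α₂ + (d₁:ℝ)/α₁)))))) := by
          gcongr
          exact hM₂ R₂ hR₂1
      _ = ENNReal.ofReal f₀ * (M₂ * ENNReal.ofReal (R₂ ^ (-(α₂ * (1 - γ))))) := by
          rw [hγdef, add_comm ((d₁:ℝ)/α₁)]
      _ ≤ ENNReal.ofReal f₀ * (M₂ * ENNReal.ofReal (L ^ (-2:ℝ))) := by gcongr
      _ = ENNReal.ofReal f₀ * M₂ * ENNReal.ofReal (L ^ (-2:ℝ)) := by ring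
  -- final assembly
  have hNle : N ≤ ENNReal.ofReal (N.toReal + 1) := by
    conv_lhs => rw [← ENNReal.ofReal_toReal hNfin]
    exact ENNReal.ofReal_le_ofReal (by linarith [ENNReal.toReal_nonneg (a := N)])
  have hL2pow : L ^ (-2:ℝ) = (L ^ 2)⁻¹ := by
    rw [show (-2:ℝ) = -((2:ℕ):ℝ) by norm_num, Real.rpow_neg hL0.le, Real.rpow_natCast]
  calc (∫⁻ x in (⋃ j ∈ {j : (Fin d₁ → ℤ) × (Fin d₂ → ℤ) |
          ‖j.1‖ ≤ 2 * L ^ β₁ ∧ ‖j.2‖ ≤ 2 * L ^ β₂}, cubeP d₁ d₂ j)ᶜ,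
        ENNReal.ofReal (f (x - y)))
      ≤ ∫⁻ x in (fun x : (Fin d₁ → ℝ) × (Fin d₂ → ℝ) => x - y) ⁻¹' (A ∪ B),
          ENNReal.ofReal (f (x - y)) := lintegral_mono_set hsub
    _ = ∫⁻ u in A ∪ B, ENNReal.ofReal (f u) := htrans
    _ ≤ (∫⁻ u in A, ENNReal.ofReal (f u)) + ∫⁻ u in B, ENNReal.ofReal (f u) :=
        lintegral_union_le _ _ _
    _ ≤ ENNReal.ofReal f₀ * M₁ * ENNReal.ofReal (L ^ (-2:ℝ)) +
        ENNReal.ofReal f₀ * M₂ * ENNReal.ofReal (L ^ (-2:ℝ)) := add_le_add hA hB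
    _ = N * ENNReal.ofReal (L ^ (-2:ℝ)) := by
        rw [hNdef, mul_add, add_mul, mul_assoc, mul_assoc]
    _ ≤ ENNReal.ofReal (N.toReal + 1) * ENNReal.ofReal (L ^ (-2:ℝ)) :=
        mul_le_mul_left hNle _
    _ = ENNReal.ofReal ((N.toReal + 1) * L ^ (-2:ℝ)) :=
        (ENNReal.ofReal_mul (by positivity)).symm
    _ = ENNReal.ofReal ((N.toReal + 1) / L ^ 2) := by
        rw [hL2pow, div_eq_mul_inv]
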